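/- Let w : ℝ → [0,∞) be locally integrable with w(λ) ≤ C(1+|λ|) for all λ, and let φ(s) = e^{−ts} for t > 0. Then sup_{α>0} α (∫_{{λ : e^{−t(1+λ²)/4} > α}} w(λ) dλ)^{δ} ≤ C' e^{−t/4} max( sup_{0<x≤1/2} e^{−tx²} x^{δ}, sup_{x≥1/2} e^{−tx²} x^{2δ} ) for any δ ∈ (0,1), where C' depends only on C and δ. -/

import Mathlib

open Real Set MeasureTheory

set_option maxHeartbeats 1000000 in
/-- Heat-semigroup symbol estimate in the odd-parity case: for a weight w bounded by
C(1+|λ|), the weak quantity for the symbol e^{-t(1+λ²)/4} is bounded by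
C' e^{-t/4} max(sup_{0<x≤1/2} e^{-tx²}x^δ, sup_{x≥1/2} e^{-tx²}x^{2δ}), with C' depending
only on C and δ. -/
theorem heat_symbol_weak_estimate_odd (C δ : ℝ) (hC : 0 < C) (hδ0 : 0 < δ) (hδ1 : δ < 1) :
    ∃ C' : ℝ, 0 < C' ∧ ∀ (w : ℝ → ℝ) (t : ℝ), Measurable w → (∀ l, 0 ≤ w l) →
      (∀ l : ℝ, w l ≤ C * (1 + |l|)) → 0 < t → ∀ α : ℝ, 0 < α →
      α * (∫ l in {l : ℝ | α < Real.exp (-(t * (1 + l ^ 2) / 4))}, w l) ^ δ ≤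
        C' * Real.exp (-t / 4) * max
          (sSup ((fun x : ℝ => Real.exp (-t * x ^ 2) * x ^ δ) '' Set.Ioc (0 : ℝ) (1 / 2)))
          (sSup ((fun x : ℝ => Real.exp (-t * x ^ 2) * x ^ (2 * δ)) '' Set.Ici (1 / 2 : ℝ))) := by
  refine ⟨(16 * C) ^ δ, Real.rpow_pos_of_pos (by linarith) δ, ?_⟩
  intro w t hw hw0 hwC ht α hα
  set f1 : ℝ → ℝ := fun x : ℝ => Real.exp (-t * x ^ 2) * x ^ δ with hf1
  set f2 : ℝ → ℝ := fun x : ℝ => Real.exp (-t * x ^ 2) * x ^ (2 * δ) with hf2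
  set S1 := sSup (f1 '' Set.Ioc (0 : ℝ) (1 / 2)) with hS1
  set S2 := sSup (f2 '' Set.Ici (1 / 2 : ℝ)) with hS2
  have hbdd1 : BddAbove (f1 '' Set.Ioc (0 : ℝ) (1 / 2)) := by
    refine ⟨1, ?_⟩
    rintro _ ⟨x, hx, rfl⟩
    have hx0 : 0 < x := hx.1
    have h1 : x ^ δ ≤ 1 := by
      calc x ^ δ ≤ (1 : ℝ) ^ δ :=
            Real.rpow_le_rpow hx0.le (by linarith [hx.2]) hδ0.le
        _ = 1 := Real.one_rpow δ
    have h2 : Real.exp (-t * x ^ 2) ≤ 1 :=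
      Real.exp_le_one_iff.mpr (by nlinarith [sq_nonneg x])
    have h3 : 0 ≤ x ^ δ := Real.rpow_nonneg hx0.le δ
    calc f1 x = Real.exp (-t * x ^ 2) * x ^ δ := rfl
      _ ≤ 1 * 1 := mul_le_mul h2 h1 h3 zero_le_one
      _ = 1 := by ring
  have hbdd2 : BddAbove (f2 '' Set.Ici (1 / 2 : ℝ)) := by
    refine ⟨Real.exp (δ ^ 2 / t), ?_⟩
    rintro _ ⟨x, hx, rfl⟩
    have hx0 : (0 : ℝ) ≤ x := by have := mem_Ici.mp hx; linarith
    have h1 : x ^ (2 * δ) ≤ Real.exp (2 * δ * x) := by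
      calc x ^ (2 * δ) ≤ (Real.exp x) ^ (2 * δ) :=
            Real.rpow_le_rpow hx0 (by linarith [Real.add_one_le_exp x]) (by positivity)
        _ = Real.exp (x * (2 * δ)) := by
            rw [← Real.exp_mul]
        _ = Real.exp (2 * δ * x) := by ring_nf
    calc f2 x = Real.exp (-t * x ^ 2) * x ^ (2 * δ) := rfl
      _ ≤ Real.exp (-t * x ^ 2) * Real.exp (2 * δ * x) :=
          mul_le_mul_of_nonneg_left h1 (Real.exp_pos _).le
      _ = Real.exp (-t * x ^ 2 + 2 * δ * x) := (Real.exp_add _ _).symm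
      _ ≤ Real.exp (δ ^ 2 / t) := by
          apply Real.exp_le_exp.mpr
          rw [le_div_iff₀ ht]
          nlinarith [sq_nonneg (t * x - δ)]
  have hS2nonneg : 0 ≤ S2 := by
    have hmem : f2 (1 / 2) ∈ f2 '' Set.Ici (1 / 2 : ℝ) :=
      ⟨1 / 2, Set.self_mem_Ici, rfl⟩
    have := le_csSup hbdd2 hmem
    have h0 : 0 ≤ f2 (1 / 2) := by
      apply mul_nonneg (Real.exp_pos _).le (Real.rpow_nonneg (by norm_num) _)
    linarith
  have hmax0 : 0 ≤ max S1 S2 := le_trans hS2nonneg (le_max_right _ _)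
  rcases le_or_gt (Real.exp (-t / 4)) α with hcase | hcase
  · -- set is empty
    have hempty : {l : ℝ | α < Real.exp (-(t * (1 + l ^ 2) / 4))} = ∅ := by
      ext l
      simp only [mem_setOf_eq, mem_empty_iff_false, iff_false, not_lt]
      calc Real.exp (-(t * (1 + l ^ 2) / 4)) ≤ Real.exp (-t / 4) :=
            Real.exp_le_exp.mpr (by nlinarith [sq_nonneg l])
        _ ≤ α := hcase
    rw [hempty, Measure.restrict_empty, integral_zero_measure,
      Real.zero_rpow hδ0.ne', mul_zero]
    have : (0:ℝ) < (16 * C) ^ δ := Real.rpow_pos_of_pos (by linarith) δ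
    exact mul_nonneg (mul_nonneg this.le (Real.exp_pos _).le) hmax0
  · -- main case
    have hlog : Real.log α < -t / 4 := by
      have := Real.log_lt_log hα hcase
      rwa [Real.log_exp] at this
    set y : ℝ := -Real.log α / t - 1 / 4 with hy
    have hy0 : 0 < y := by
      have h1 : t / 4 < -Real.log α := by linarith
      have h2 : (1 : ℝ) / 4 < -Real.log α / t := by
        rw [lt_div_iff₀ ht]; linarith
      rw [hy]; linarith
    set x := Real.sqrt y with hx
    have hx0 : 0 < x := Real.sqrt_pos.mpr hy0
    have hxsq : x ^ 2 = y := Real.sq_sqrt hy0.le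
    have hlogα : Real.log α = -t / 4 + -t * x ^ 2 := by
      rw [hxsq, hy]; field_simp; ring
    have hαeq : α = Real.exp (-t / 4) * Real.exp (-t * x ^ 2) := by
      rw [← Real.exp_add, ← hlogα, Real.exp_log hα]
    have hset : {l : ℝ | α < Real.exp (-(t * (1 + l ^ 2) / 4))} = Ioo (-(2 * x)) (2 * x) := by
      ext l
      simp only [mem_setOf_eq, mem_Ioo]
      rw [← Real.log_lt_iff_lt_exp hα, hlogα]
      constructor
      · intro h
        have hl2 : l ^ 2 < (2 * x) ^ 2 := by nlinarith
        have habs : |l| < 2 * x := abs_lt_of_sq_lt_sq hl2 (by linarith)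
        exact abs_lt.mp habs
      · rintro ⟨h1, h2⟩
        have hl2 : l ^ 2 < 4 * x ^ 2 := by nlinarith
        nlinarith [mul_lt_mul_of_pos_left hl2 ht]
    rw [hset]
    have hμlt : volume (Ioo (-(2 * x)) (2 * x)) < ⊤ := by
      rw [Real.volume_Ioo]; exact ENNReal.ofReal_lt_top
    have hμ : (volume (Ioo (-(2 * x)) (2 * x))).toReal = 4 * x := by
      rw [Real.volume_Ioo, ENNReal.toReal_ofReal (by linarith)]
      ring
    have hIle : ∫ l in Ioo (-(2 * x)) (2 * x), w l ≤ C * (1 + 2 * x) * (4 * x) := by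
      have hbnd : ∀ l ∈ Ioo (-(2 * x)) (2 * x), ‖w l‖ ≤ C * (1 + 2 * x) := by
        intro l hl
        rw [Real.norm_eq_abs, abs_of_nonneg (hw0 l)]
        have : |l| ≤ 2 * x := by
          rw [abs_le]; exact ⟨by linarith [hl.1], hl.2.le⟩
        have := hwC l
        nlinarith
      have hmeas : AEStronglyMeasurable w (volume.restrict (Ioo (-(2 * x)) (2 * x))) :=
        hw.aestronglyMeasurable
      have h := norm_setIntegral_le_of_norm_le_const hμlt hbnd
      rw [measureReal_def, hμ] at h
      calc ∫ l in Ioo (-(2 * x)) (2 * x), w l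
          ≤ ‖∫ l in Ioo (-(2 * x)) (2 * x), w l‖ := le_abs_self _
        _ ≤ C * (1 + 2 * x) * (4 * x) := h
    have hI0 : 0 ≤ ∫ l in Ioo (-(2 * x)) (2 * x), w l :=
      setIntegral_nonneg measurableSet_Ioo (fun l _ => hw0 l)
    have key : α * (∫ l in Ioo (-(2 * x)) (2 * x), w l) ^ δ
        ≤ α * (C * (1 + 2 * x) * (4 * x)) ^ δ :=
      mul_le_mul_of_nonneg_left (Real.rpow_le_rpow hI0 hIle hδ0.le) hα.le
    rcases le_or_gt x (1 / 2) with hxc | hxc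
    · -- small x
      have hle : C * (1 + 2 * x) * (4 * x) ≤ 8 * C * x := by nlinarith
      have h8 : (0:ℝ) ≤ 8 * C := by linarith
      calc α * (∫ l in Ioo (-(2 * x)) (2 * x), w l) ^ δ
          ≤ α * (C * (1 + 2 * x) * (4 * x)) ^ δ := key
        _ ≤ α * (8 * C * x) ^ δ := by
            apply mul_le_mul_of_nonneg_left _ hα.le
            exact Real.rpow_le_rpow (by positivity) hle hδ0.le
        _ = (8 * C) ^ δ * (Real.exp (-t / 4) * (Real.exp (-t * x ^ 2) * x ^ δ)) := by
            rw [hαeq, Real.mul_rpow h8 hx0.le]; ring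
        _ ≤ (8 * C) ^ δ * (Real.exp (-t / 4) * S1) := by
            apply mul_le_mul_of_nonneg_left _ (Real.rpow_nonneg h8 δ)
            apply mul_le_mul_of_nonneg_left _ (Real.exp_pos _).le
            exact le_csSup hbdd1 ⟨x, ⟨hx0, hxc⟩, rfl⟩
        _ ≤ (8 * C) ^ δ * (Real.exp (-t / 4) * max S1 S2) := by
            apply mul_le_mul_of_nonneg_left _ (Real.rpow_nonneg h8 δ)
            exact mul_le_mul_of_nonneg_left (le_max_left _ _) (Real.exp_pos _).le
        _ ≤ (16 * C) ^ δ * (Real.exp (-t / 4) * max S1 S2) := by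
            apply mul_le_mul_of_nonneg_right _ (mul_nonneg (Real.exp_pos _).le hmax0)
            exact Real.rpow_le_rpow h8 (by linarith) hδ0.le
        _ = (16 * C) ^ δ * Real.exp (-t / 4) * max S1 S2 := by ring
    · -- large x
      have hle : C * (1 + 2 * x) * (4 * x) ≤ 16 * C * x ^ 2 := by nlinarith
      have h16 : (0:ℝ) ≤ 16 * C := by linarith
      have hx2δ : (x ^ 2) ^ δ = x ^ (2 * δ) := by
        rw [← Real.rpow_natCast x 2, ← Real.rpow_mul hx0.le]
        norm_num
      calc α * (∫ l in Ioo (-(2 * x)) (2 * x), w l) ^ δ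
          ≤ α * (C * (1 + 2 * x) * (4 * x)) ^ δ := key
        _ ≤ α * (16 * C * x ^ 2) ^ δ := by
            apply mul_le_mul_of_nonneg_left _ hα.le
            exact Real.rpow_le_rpow (by positivity) hle hδ0.le
        _ = (16 * C) ^ δ * (Real.exp (-t / 4) * (Real.exp (-t * x ^ 2) * x ^ (2 * δ))) := by
            rw [hαeq, Real.mul_rpow h16 (sq_nonneg x), hx2δ]; ring
        _ ≤ (16 * C) ^ δ * (Real.exp (-t / 4) * S2) := by
            apply mul_le_mul_of_nonneg_left _ (Real.rpow_nonneg h16 δ)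
            apply mul_le_mul_of_nonneg_left _ (Real.exp_pos _).le
            exact le_csSup hbdd2 ⟨x, hxc.le, rfl⟩
        _ ≤ (16 * C) ^ δ * (Real.exp (-t / 4) * max S1 S2) := by
            apply mul_le_mul_of_nonneg_left _ (Real.rpow_nonneg h16 δ)
            exact mul_le_mul_of_nonneg_left (le_max_right _ _) (Real.exp_pos _).le
        _ = (16 * C) ^ δ * Real.exp (-t / 4) * max S1 S2 := by ring
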